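/- Let A be a C*-algebra and E a pre-Hilbert *-bimodule over A. Then for all x, y ∈ E and b ∈ A, the following inequality holds in A: ⟨x,y⟩*·⟨x,y⟩ + b*·⟨x*, x⟩·b ≤ ‖x‖_m² · (⟨y*, y⟩ + b*·b), where the right-hand side is the nonnegative real scalar ‖x‖_m² times the positive element ⟨y*, y⟩ + b*·b. -/

import Mathlib

/-- A pre-Hilbert `*`-bimodule over a C*-algebra `A`: a complex vector space `E` with
commuting left and right `A`-module structures compatible with the complex scalar action,
an `A`-bilinear map `inn : E × E → A`, and a conjugate-linear involution `invol`, satisfying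
(a) `⟨x,y⟩* = ⟨y*, x*⟩`, (b) `(a•x)* = x*•a*`, and (c) `⟨x, x*⟩ ≥ 0`. -/
structure PreHilbertStarBimodule (A : Type*) [CStarAlgebra A] [PartialOrder A]
    [StarOrderedRing A] (E : Type*) [AddCommGroup E] [Module ℂ E] where
  /-- the left action of `A` on `E` -/
  lsmul : A → E → E
  /-- the right action of `A` on `E` -/
  rsmul : E → A → E
  /-- the `A`-valued bilinear pairing -/
  inn : E → E → A
  /-- the involution on `E` -/
  invol : E → E
  lsmul_add : ∀ (a : A) (x y : E), lsmul a (x + y) = lsmul a x + lsmul a y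
  add_lsmul : ∀ (a b : A) (x : E), lsmul (a + b) x = lsmul a x + lsmul b x
  mul_lsmul : ∀ (a b : A) (x : E), lsmul (a * b) x = lsmul a (lsmul b x)
  one_lsmul : ∀ x : E, lsmul 1 x = x
  lsmul_csmul : ∀ (c : ℂ) (a : A) (x : E), lsmul a (c • x) = c • lsmul a x
  csmul_lsmul : ∀ (c : ℂ) (a : A) (x : E), lsmul (c • a) x = c • lsmul a x
  rsmul_add : ∀ (x y : E) (a : A), rsmul (x + y) a = rsmul x a + rsmul y a
  add_rsmul : ∀ (x : E) (a b : A), rsmul x (a + b) = rsmul x a + rsmul x b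
  rsmul_mul : ∀ (x : E) (a b : A), rsmul x (a * b) = rsmul (rsmul x a) b
  rsmul_one : ∀ x : E, rsmul x 1 = x
  rsmul_csmul : ∀ (c : ℂ) (x : E) (a : A), rsmul (c • x) a = c • rsmul x a
  csmul_rsmul : ∀ (c : ℂ) (x : E) (a : A), rsmul x (c • a) = c • rsmul x a
  lsmul_rsmul_comm : ∀ (a : A) (x : E) (b : A), lsmul a (rsmul x b) = rsmul (lsmul a x) b
  inn_add_left : ∀ x y z : E, inn (x + y) z = inn x z + inn y z
  inn_add_right : ∀ x y z : E, inn x (y + z) = inn x y + inn x z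
  inn_csmul_left : ∀ (c : ℂ) (x y : E), inn (c • x) y = c • inn x y
  inn_csmul_right : ∀ (c : ℂ) (x y : E), inn x (c • y) = c • inn x y
  inn_lsmul_left : ∀ (a : A) (x y : E), inn (lsmul a x) y = a * inn x y
  inn_rsmul_left : ∀ (a : A) (x y : E), inn (rsmul x a) y = inn x (lsmul a y)
  inn_rsmul_right : ∀ (a : A) (x y : E), inn x (rsmul y a) = inn x y * a
  invol_add : ∀ x y : E, invol (x + y) = invol x + invol y
  invol_csmul : ∀ (c : ℂ) (x : E), invol (c • x) = (starRingEnd ℂ c) • invol x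
  invol_invol : ∀ x : E, invol (invol x) = x
  star_inn : ∀ x y : E, star (inn x y) = inn (invol y) (invol x)
  invol_lsmul : ∀ (a : A) (x : E), invol (lsmul a x) = rsmul (invol x) (star a)
  inn_invol_nonneg : ∀ x : E, 0 ≤ inn x (invol x)

namespace PreHilbertStarBimodule

variable {A : Type*} [CStarAlgebra A] [PartialOrder A] [StarOrderedRing A]
variable {E : Type*} [AddCommGroup E] [Module ℂ E]

/-- the left seminorm `‖x‖_l = ‖⟨x, x*⟩‖^{1/2}` -/
noncomputable def normL (M : PreHilbertStarBimodule A E) (x : E) : ℝ :=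
  Real.sqrt ‖M.inn x (M.invol x)‖

/-- the right seminorm `‖x‖_r = ‖⟨x*, x⟩‖^{1/2}` -/
noncomputable def normR (M : PreHilbertStarBimodule A E) (x : E) : ℝ :=
  Real.sqrt ‖M.inn (M.invol x) x‖

/-- the max seminorm `‖x‖_m = max (‖x‖_l, ‖x‖_r)` -/
noncomputable def normM (M : PreHilbertStarBimodule A E) (x : E) : ℝ :=
  max (M.normL x) (M.normR x)

variable (M : PreHilbertStarBimodule A E)

lemma invol_rsmul' (a : A) (x : E) :
    M.invol (M.rsmul x a) = M.lsmul (star a) (M.invol x) := by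
  have h := M.invol_lsmul (star a) (M.invol x)
  rw [star_star, M.invol_invol] at h
  rw [← h, M.invol_invol]

lemma key' (x y : E) (t u : A) :
    0 ≤ star t * (M.inn (M.invol y) y * t) + star t * (M.inn (M.invol y) (M.invol x) * u)
      + (star u * (M.inn x y * t) + star u * (M.inn x (M.invol x) * u)) := by
  have h0 := M.inn_invol_nonneg (M.invol (M.rsmul y t + M.rsmul (M.invol x) u))
  rw [M.invol_invol, M.invol_add, M.invol_rsmul', M.invol_rsmul', M.invol_invol,
    M.inn_add_left, M.inn_add_right, M.inn_add_right,
    M.inn_lsmul_left, M.inn_lsmul_left, M.inn_lsmul_left, M.inn_lsmul_left,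
    M.inn_rsmul_right, M.inn_rsmul_right, M.inn_rsmul_right, M.inn_rsmul_right] at h0
  exact h0

end PreHilbertStarBimodule

/-- For all `x, y ∈ E` and `b ∈ A`:
`⟨x,y⟩*⟨x,y⟩ + b*⟨x*,x⟩b ≤ ‖x‖_m² (⟨y*,y⟩ + b*b)` in `A`. -/
theorem PreHilbertStarBimodule.linking_estimate
    {A : Type*} [CStarAlgebra A] [PartialOrder A] [StarOrderedRing A]
    {E : Type*} [AddCommGroup E] [Module ℂ E]
    (M : PreHilbertStarBimodule A E) (x y : E) (b : A) :
    star (M.inn x y) * M.inn x y + star b * M.inn (M.invol x) x * b ≤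
      (M.normM x ^ 2 : ℝ) • (M.inn (M.invol y) y + star b * b) := by
  set c := M.inn x y with hc
  set G := M.inn (M.invol y) y with hG
  set F := M.inn x (M.invol x) with hF
  set X := M.inn (M.invol x) x with hX
  set k := M.normM x ^ 2 with hk
  have hF0 : 0 ≤ F := M.inn_invol_nonneg x
  have hX0 : 0 ≤ X := by
    have h := M.inn_invol_nonneg (M.invol x); rwa [M.invol_invol] at h
  have hcc0 : 0 ≤ star c * c := star_mul_self_nonneg c
  have hk0 : 0 ≤ k := sq_nonneg _
  have hLM : M.normL x ≤ M.normM x := le_max_left _ _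
  have hRM : M.normR x ≤ M.normM x := le_max_right _ _
  have hFn : ‖F‖ = M.normL x ^ 2 := by
    rw [normL, Real.sq_sqrt (norm_nonneg _)]
  have hXn : ‖X‖ = M.normR x ^ 2 := by
    rw [normR, Real.sq_sqrt (norm_nonneg _)]
  have hFnk : ‖F‖ ≤ k := by
    rw [hFn, hk]; exact pow_le_pow_left₀ (Real.sqrt_nonneg _) hLM 2
  have hXnk : ‖X‖ ≤ k := by
    rw [hXn, hk]; exact pow_le_pow_left₀ (Real.sqrt_nonneg _) hRM 2
  have hFle : F ≤ k • (1 : A) := by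
    calc F ≤ algebraMap ℝ A ‖F‖ := IsSelfAdjoint.le_algebraMap_norm_self (.of_nonneg hF0)
    _ = ‖F‖ • (1 : A) := Algebra.algebraMap_eq_smul_one _
    _ ≤ k • (1 : A) := smul_le_smul_of_nonneg_right hFnk zero_le_one
  have hXle : X ≤ k • (1 : A) := by
    calc X ≤ algebraMap ℝ A ‖X‖ := IsSelfAdjoint.le_algebraMap_norm_self (.of_nonneg hX0)
    _ = ‖X‖ • (1 : A) := Algebra.algebraMap_eq_smul_one _
    _ ≤ k • (1 : A) := smul_le_smul_of_nonneg_right hXnk zero_le_one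
  have hbXb : star b * X * b ≤ k • (star b * b) := by
    calc star b * X * b ≤ star b * (k • (1:A)) * b := star_left_conjugate_le_conjugate hXle b
    _ = k • (star b * b) := by
        rw [mul_smul_comm, smul_mul_assoc, mul_one]
  have hcFc : star c * (F * c) ≤ k • (star c * c) := by
    calc star c * (F * c) = star c * F * c := by rw [mul_assoc]
    _ ≤ star c * (k • (1:A)) * c := star_left_conjugate_le_conjugate hFle c
    _ = k • (star c * c) := by rw [mul_smul_comm, smul_mul_assoc, mul_one]
  have hCS : star c * c ≤ k • G := by
    rcases eq_or_lt_of_le hk0 with hkz | hkpos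
    · -- k = 0 : show c = 0
      have hnM : M.normM x = 0 := by
        have := pow_eq_zero_iff (n := 2) (by norm_num) |>.mp hkz.symm
        exact this
      have hnL : M.normL x = 0 :=
        le_antisymm (hnM ▸ hLM) (Real.sqrt_nonneg _)
      have hFz : F = 0 := by
        have : ‖F‖ = 0 := by rw [hFn, hnL]; ring
        exact norm_eq_zero.mp this
      have key : ∀ r : ℝ, 0 < r → (2 * r) • (star c * c) ≤ G := by
        intro r hr
        have h := M.key' x y (1 : A) ((-r : ℝ) • c)
        rw [← M.star_inn] at h
        simp only [star_smul, star_trivial, star_one, smul_mul_assoc, mul_smul_comm,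
          smul_smul, mul_one, one_mul, ← hc, ← hG, ← hF, hFz, mul_zero, zero_mul,
          smul_zero, add_zero] at h
        have heq : G + -r • (star c * c) + -r • (star c * c)
            = G - (2 * r) • (star c * c) := by module
        rw [heq] at h
        exact sub_nonneg.mp h
      have hccz : star c * c = 0 := by
        by_contra hne
        have hpos : 0 < ‖star c * c‖ := norm_pos_iff.mpr hne
        set r := (‖G‖ + 1) / (2 * ‖star c * c‖) with hr
        have hrpos : 0 < r := by positivity
        have h1 := key r hrpos
        have h2 : ‖(2 * r) • (star c * c)‖ ≤ ‖G‖ :=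
          CStarAlgebra.norm_le_norm_of_nonneg_of_le
            (smul_nonneg (by positivity) hcc0) h1
        rw [norm_smul, Real.norm_eq_abs, abs_of_pos (by positivity)] at h2
        rw [hr] at h2
        have : 2 * ((‖G‖ + 1) / (2 * ‖star c * c‖)) * ‖star c * c‖ = ‖G‖ + 1 := by
          field_simp
        rw [this] at h2
        linarith
      rw [hccz, ← hkz, zero_smul]
    · -- k > 0
      set s := Real.sqrt k with hs
      have hspos : 0 < s := Real.sqrt_pos.mpr hkpos
      have hss : s * s = k := Real.mul_self_sqrt hk0
      have hsi : s * s⁻¹ = 1 := mul_inv_cancel₀ hspos.ne'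
      have hsi' : s⁻¹ * s = 1 := inv_mul_cancel₀ hspos.ne'
      have h := M.key' x y ((s : ℝ) • (1:A)) ((-s⁻¹ : ℝ) • c)
      rw [← M.star_inn] at h
      simp only [star_smul, star_trivial, star_one, smul_mul_assoc, mul_smul_comm,
        smul_smul, mul_one, one_mul, ← hc, ← hG, ← hF] at h
      have heq : (s * s) • G + (-s⁻¹ * s) • (star c * c) +
          ((s * -s⁻¹) • (star c * c) + (-s⁻¹ * -s⁻¹) • (star c * (F * c)))
          = k • G - star c * c - star c * c + (s⁻¹ * s⁻¹) • (star c * (F * c)) := by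
        rw [hss]
        rw [show (-s⁻¹ * s) = -1 by rw [neg_mul, hsi']]
        rw [show (s * -s⁻¹) = -1 by rw [mul_neg, hsi]]
        rw [show (-s⁻¹ * -s⁻¹) = s⁻¹ * s⁻¹ by ring]
        module
      rw [heq] at h
      have hT : (s⁻¹ * s⁻¹) • (star c * (F * c)) ≤ star c * c := by
        calc (s⁻¹ * s⁻¹) • (star c * (F * c))
            ≤ (s⁻¹ * s⁻¹) • (k • (star c * c)) :=
              smul_le_smul_of_nonneg_left hcFc (by positivity)
        _ = ((s⁻¹ * s⁻¹) * k) • (star c * c) := smul_smul _ _ _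
        _ = star c * c := by
              rw [show (s⁻¹ * s⁻¹) * k = 1 by
                rw [← hss]; field_simp]
              rw [one_smul]
      have h2 : 0 ≤ k • G - star c * c - star c * c + star c * c :=
        le_trans h (by exact add_le_add_right hT _)
      have h3 : k • G - star c * c - star c * c + star c * c = k • G - star c * c := by
        abel
      rw [h3] at h2
      exact sub_nonneg.mp h2
  calc star c * c + star b * X * b ≤ k • G + k • (star b * b) := add_le_add hCS hbXb
  _ = k • (G + star b * b) := (smul_add _ _ _).symm
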